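/- arXiv:2501.11486 — 6 statements merged into one kernel-verified Lean document; each statement's English description precedes it below -/
import Mathlib

section
/- For a finite group G with a solvable normal subgroup N and any x ∈ G, the cardinality of Sol_G(x) is divisible by |N|. -/
open scoped Pointwise

def solubilizer (G : Type*) [Group G] (x : G) : Set G :=
  {y | IsSolvable ↥(Subgroup.closure {x, y})}

lemma solvable_of_le' {G : Type*} [Group G] {H K : Subgroup G} (h : H ≤ K)
    (hK : IsSolvable ↥K) : IsSolvable ↥H :=
  haveI : Group.IsSolvable ↥K := hK
  solvable_of_solvable_injective (f := (Subgroup.subgroupOfEquivOfLe h).symm.toMonoidHom)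
    (Subgroup.subgroupOfEquivOfLe h).symm.injective

lemma solvable_sup {G : Type*} [Group G] (N H : Subgroup G) [N.Normal]
    (hN : IsSolvable ↥N) (hH : IsSolvable ↥H) : IsSolvable ↥(N ⊔ H) := by
  set K := N ⊔ H with hK
  set N' := N.subgroupOf K with hN'
  have hNK : N ≤ K := le_sup_left
  have : IsSolvable ↥N' :=
    haveI : Group.IsSolvable ↥N := hN
    solvable_of_solvable_injective (f := (Subgroup.subgroupOfEquivOfLe hNK).toMonoidHom)
      (Subgroup.subgroupOfEquivOfLe hNK).injective
  have : IsSolvable (↥K ⧸ N') := by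
    have hsurj : Function.Surjective
        ((QuotientGroup.mk' N').comp (Subgroup.inclusion (le_sup_right : H ≤ K))) := by
      intro q
      obtain ⟨k, rfl⟩ := QuotientGroup.mk'_surjective N' q
      obtain ⟨k, hk⟩ := k
      have hk' : (k : G) ∈ ((N : Set G) * (H : Set G)) := by
        rw [← Subgroup.normal_mul]; exact hk
      obtain ⟨n, hn, h, hh, rfl⟩ := hk'
      refine ⟨⟨h, hh⟩, ?_⟩
      simp only [MonoidHom.comp_apply, QuotientGroup.mk'_apply]
      rw [QuotientGroup.eq, hN', Subgroup.mem_subgroupOf]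
      show (h⁻¹ * (n * h) : G) ∈ N
      have : (h⁻¹ * (n * h) : G) = h⁻¹ * n * h := by group
      rw [this]
      exact ‹N.Normal›.conj_mem' n hn h
    haveI : Group.IsSolvable ↥H := hH
    exact solvable_of_surjective hsurj
  haveI : Group.IsSolvable ↥N' := ‹IsSolvable ↥N'›
  haveI : Group.IsSolvable (↥K ⧸ N') := ‹IsSolvable (↥K ⧸ N')›
  exact solvable_of_ker_le_range N'.subtype (QuotientGroup.mk' N')
    (by rw [QuotientGroup.ker_mk', Subgroup.range_subtype])

theorem stmt4 {G : Type*} [Group G] [Finite G] (N : Subgroup G) [N.Normal]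
    (hN : IsSolvable ↥N) (x : G) :
    Nat.card N ∣ Nat.card (solubilizer G x) := by
  set S := solubilizer G x with hS
  set T : Set (G ⧸ N) := QuotientGroup.mk '' S with hT
  have hpre : S = QuotientGroup.mk ⁻¹' T := by
    ext y'
    constructor
    · intro h; exact ⟨y', h, rfl⟩
    · rintro ⟨y, hy, hyy⟩
      have hmem : y⁻¹ * y' ∈ N := by
        rw [← QuotientGroup.eq]; exact hyy
      have hle : Subgroup.closure {x, y'} ≤ N ⊔ Subgroup.closure {x, y} := by
        rw [Subgroup.closure_le]
        rintro z (rfl | rfl)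
        · exact Subgroup.mem_sup_right (Subgroup.subset_closure (by simp))
        · have : z = y * (y⁻¹ * z) := by group
          rw [this]
          exact mul_mem (Subgroup.mem_sup_right (Subgroup.subset_closure (by simp)))
            (Subgroup.mem_sup_left hmem)
      exact solvable_of_le' hle (solvable_sup N _ hN hy)
  rw [hpre, Nat.card_congr (QuotientGroup.preimageMkEquivSubgroupProdSet N T),
    Nat.card_prod]
  exact Dvd.intro _ rfl
end

section
/- For a finite group G with a normal subgroup N and x ∈ G, the solubilizer of the coset xN in G/N equals the image of Sol_G(x) under the quotient map, provided N is solvable. -/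
theorem stmt5 {G : Type*} [Group G] [Finite G] (N : Subgroup G) [N.Normal]
    (hN : IsSolvable ↥N) (x : G) :
    solubilizer (G ⧸ N) (QuotientGroup.mk x) =
      QuotientGroup.mk '' solubilizer G x := by
  ext z
  constructor
  · rintro hz
    obtain ⟨y, rfl⟩ := QuotientGroup.mk_surjective z
    refine ⟨y, ?_, rfl⟩
    -- K = preimage of closure {mk x, mk y}
    set S : Subgroup (G ⧸ N) := Subgroup.closure {QuotientGroup.mk x, QuotientGroup.mk y}
    have hS : IsSolvable ↥S := hz
    set K : Subgroup G := S.comap (QuotientGroup.mk' N)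
    have hNK : N ≤ K := fun n hn => by
      have : (QuotientGroup.mk' N) n = 1 := (QuotientGroup.eq_one_iff n).mpr hn
      simp [K, Subgroup.mem_comap, this, one_mem]
    have hKsolv : IsSolvable ↥K := by
      have hmaps : ∀ k : K, (QuotientGroup.mk' N) (k : G) ∈ S := fun k => k.2
      let g : ↥K →* ↥S :=
        ((QuotientGroup.mk' N).comp K.subtype).codRestrict S fun k => k.2
      let f : ↥N →* ↥K := Subgroup.inclusion hNK
      haveI : Group.IsSolvable ↥N := hN
      haveI : Group.IsSolvable ↥S := hS
      refine solvable_of_ker_le_range f g ?_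
      rintro ⟨k, hk⟩ hker
      have hk1 : (QuotientGroup.mk' N) k = 1 := by
        have := congrArg ((↑) : S → G ⧸ N) hker
        exact this
      have hkN : k ∈ N := (QuotientGroup.eq_one_iff k).mp hk1
      exact ⟨⟨k, hkN⟩, rfl⟩
    have hle : Subgroup.closure {x, y} ≤ K := by
      rw [Subgroup.closure_le]
      rintro a (rfl | rfl)
      · exact Subgroup.subset_closure (by simp)
      · exact Subgroup.subset_closure (by simp)
    haveI : Group.IsSolvable ↥K := hKsolv
    exact solvable_of_solvable_injective (Subgroup.inclusion_injective hle)
  · rintro ⟨y, hy, rfl⟩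
    have hsolv : IsSolvable ↥(Subgroup.closure {x, y}) := hy
    have hmap : (Subgroup.closure {x, y}).map (QuotientGroup.mk' N) =
        Subgroup.closure {QuotientGroup.mk x, QuotientGroup.mk y} := by
      rw [MonoidHom.map_closure]
      congr 1
      simp [Set.image_pair]
    have : IsSolvable ↥((Subgroup.closure {x, y}).map (QuotientGroup.mk' N)) := by
      haveI : Group.IsSolvable ↥(Subgroup.closure {x, y}) := hsolv
      exact solvable_of_surjective
        (MonoidHom.subgroupMap_surjective (QuotientGroup.mk' N) _ : Function.Surjective
          ((QuotientGroup.mk' N).subgroupMap (Subgroup.closure {x, y})))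
    rw [hmap] at this
    exact this
end

section
/- If G is a finite group, x ∈ G, and |Sol_G(x)| = p for a prime p, then G has order p. -/
open Subgroup Pointwise

section Helpers

variable {G : Type*} [Group G]

lemma isSolvable_of_le' {H K : Subgroup G} [Group.IsSolvable ↥K] (h : H ≤ K) : Group.IsSolvable ↥H :=
  solvable_of_solvable_injective (Subgroup.inclusion_injective h)

lemma isSolvable_zpowers (x : G) : Group.IsSolvable ↥(zpowers x) := by
  apply isSolvable_of_comm
  rintro ⟨a, m, rfl⟩ ⟨b, n, rfl⟩
  ext
  exact (Commute.zpow_zpow (Commute.refl x) m n)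

/-- solvable-by-cyclic is solvable -/
lemma solvable_of_normal_zpowers {T : Type*} [Group T] (N : Subgroup T) [N.Normal]
    (hsol : Group.IsSolvable ↥N) (t : T) (h : N ⊔ zpowers t = ⊤) : Group.IsSolvable T := by
  have hcomm : ∀ a b : T ⧸ N, a * b = b * a := by
    have hmap : Subgroup.map (QuotientGroup.mk' N) (N ⊔ zpowers t) = ⊤ := by
      rw [h]
      exact Subgroup.map_top_of_surjective _ (QuotientGroup.mk'_surjective N)
    rw [Subgroup.map_sup, MonoidHom.map_zpowers] at hmap
    have hN : Subgroup.map (QuotientGroup.mk' N) N = ⊥ := by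
      rw [Subgroup.map_eq_bot_iff, QuotientGroup.ker_mk']
    rw [hN, bot_sup_eq] at hmap
    intro a b
    have ha : a ∈ zpowers ((QuotientGroup.mk' N) t) := hmap ▸ Subgroup.mem_top a
    have hb : b ∈ zpowers ((QuotientGroup.mk' N) t) := hmap ▸ Subgroup.mem_top b
    obtain ⟨m, rfl⟩ := ha
    obtain ⟨n, rfl⟩ := hb
    exact Commute.zpow_zpow (Commute.refl _) m n
  have : Group.IsSolvable (T ⧸ N) := isSolvable_of_comm hcomm
  exact solvable_of_ker_le_range N.subtype (QuotientGroup.mk' N)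
    (by rw [QuotientGroup.ker_mk', Subgroup.range_subtype])

lemma solvable_closure_of_mem_normalizer {x y : G} (H : Subgroup G) (hsol : Group.IsSolvable ↥H)
    (hx : x ∈ H) (hy : y ∈ normalizer (H : Set G)) : Group.IsSolvable ↥(Subgroup.closure {x, y}) := by
  set T := Subgroup.closure ({x, y} : Set G) with hT
  have hTn : T ≤ normalizer (H : Set G) := by
    rw [hT, closure_le]
    rintro z (rfl | rfl)
    · exact le_normalizer hx
    · exact hy
  set N : Subgroup T := H.subgroupOf T with hNdef
  have hNnormal : N.Normal := by
    constructor
    rintro ⟨n, hnT⟩ hn ⟨g, hgT⟩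
    have := (Subgroup.mem_normalizer_iff.mp (hTn hgT) n).mp (Subgroup.mem_subgroupOf.mp hn)
    simpa [hNdef, Subgroup.mem_subgroupOf] using this
  have hNsol : Group.IsSolvable ↥N := by
    have h1 : Group.IsSolvable ↥(H ⊓ T) := isSolvable_of_le' inf_le_left
    have h2 : (H ⊓ T).subgroupOf T = N := by
      rw [hNdef, Subgroup.inf_subgroupOf_right]
    have e := Subgroup.subgroupOfEquivOfLe (inf_le_right : H ⊓ T ≤ T)
    rw [h2] at e
    letI := h1
    exact solvable_of_solvable_injective (f := e.toMonoidHom) e.injective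
  have hyT : y ∈ T := Subgroup.subset_closure (by simp)
  set t : T := ⟨y, hyT⟩ with ht
  have htop : N ⊔ zpowers t = ⊤ := by
    rw [eq_top_iff, ← Subgroup.closure_closure_coe_preimage (k := ({x, y} : Set G)), closure_le]
    rintro ⟨z, hzT⟩ hz
    simp only [Set.mem_preimage] at hz
    rcases hz with h1 | h2
    · apply Subgroup.mem_sup_left
      exact Subgroup.mem_subgroupOf.mpr (by simp only [h1]; exact hx)
    · have : (⟨z, hzT⟩ : T) = t := Subtype.ext h2
      rw [this]
      exact Subgroup.mem_sup_right (Subgroup.mem_zpowers t)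
  exact solvable_of_normal_zpowers N hNsol t htop

lemma closure_pair_eq (x y : G) : Subgroup.closure {x, y} = zpowers x ⊔ zpowers y := by
  rw [show ({x, y} : Set G) = {x} ∪ {y} from rfl, Subgroup.closure_union,
    ← zpowers_eq_closure, ← zpowers_eq_closure]

lemma solubilizer_congr {x x' : G} (hxx : zpowers x = zpowers x') :
    solubilizer G x = solubilizer G x' := by
  ext y
  simp only [solubilizer, Set.mem_setOf_eq]
  rw [closure_pair_eq, closure_pair_eq x' y, hxx]

lemma mem_solubilizer_conj {x c y : G} (hy : y ∈ solubilizer G x) :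
    c * y * c⁻¹ ∈ solubilizer G (c * x * c⁻¹) := by
  have hcl : Subgroup.closure ({c * x * c⁻¹, c * y * c⁻¹} : Set G)
      = Subgroup.map (MulAut.conj c).toMonoidHom (Subgroup.closure {x, y}) := by
    rw [MonoidHom.map_closure]
    congr 1
    rw [Set.image_pair]
    simp [MulAut.conj_apply, mul_assoc]
  show Group.IsSolvable ↥(Subgroup.closure ({c * x * c⁻¹, c * y * c⁻¹} : Set G))
  rw [hcl]
  have hsol : Group.IsSolvable ↥(Subgroup.closure ({x, y} : Set G)) := hy
  have e := Subgroup.equivMapOfInjective (Subgroup.closure ({x, y} : Set G))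
    (MulAut.conj c).toMonoidHom (MulAut.conj c).injective
  exact solvable_of_surjective (f := e.toMonoidHom) e.surjective

lemma mul_mem_solubilizer {x y h : G} [Finite G] (hy : y ∈ solubilizer G x)
    (hh : h ∈ zpowers x) : y * h ∈ solubilizer G x := by
  have hxmem : x ∈ Subgroup.closure ({x, y * h} : Set G) := Subgroup.subset_closure (by simp)
  have hxmem' : x ∈ Subgroup.closure ({x, y} : Set G) := Subgroup.subset_closure (by simp)
  have hcl : Subgroup.closure ({x, y * h} : Set G) = Subgroup.closure {x, y} := by
    apply le_antisymm
    · rw [closure_le]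
      rintro z (rfl | rfl)
      · exact hxmem'
      · exact mul_mem (Subgroup.subset_closure (by simp))
          ((zpowers_le.mpr hxmem') hh)
    · rw [closure_le]
      rintro z hz
      rcases hz with rfl | h2
      · exact hxmem
      · rw [Set.mem_singleton_iff] at h2
        rw [h2]
        have hht : (y * h) * h⁻¹ ∈ Subgroup.closure ({x, y * h} : Set G) :=
          mul_mem (Subgroup.subset_closure (by simp))
            (inv_mem ((zpowers_le.mpr hxmem) hh))
        simpa using hht
  show Group.IsSolvable ↥(Subgroup.closure ({x, y * h} : Set G))
  rw [hcl]
  exact hy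

lemma orderOf_dvd_card_solubilizer [Finite G] (x : G) :
    orderOf x ∣ Nat.card (solubilizer G x) := by
  classical
  set H := zpowers x with hH
  have hpre : ((QuotientGroup.mk : G → G ⧸ H) ⁻¹'
      ((QuotientGroup.mk : G → G ⧸ H) '' (solubilizer G x)) : Set G) = solubilizer G x := by
    apply Set.Subset.antisymm
    · rintro y' ⟨y, hy, hyy⟩
      have : y⁻¹ * y' ∈ H := (QuotientGroup.eq (s := H)).mp hyy
      · have := mul_mem_solubilizer hy this
        simpa using this
    · exact Set.subset_preimage_image _ _
  have hcard := Nat.card_congr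
    (QuotientGroup.preimageMkEquivSubgroupProdSet H
      ((QuotientGroup.mk : G → G ⧸ H) '' (solubilizer G x)))
  rw [hpre] at hcard
  rw [hcard, Nat.card_prod, ← Nat.card_zpowers]
  exact dvd_mul_right _ _

end Helpers

theorem stmt6 {G : Type*} [Group G] [Finite G] (x : G) (p : ℕ) (hp : p.Prime)
    (h : Nat.card (solubilizer G x) = p) :
    Nat.card G = p := by
  classical
  haveI : Fact p.Prime := ⟨hp⟩
  have hzp : ∀ y ∈ zpowers x, y ∈ solubilizer G x := fun y hy =>
    solvable_closure_of_mem_normalizer (zpowers x) (isSolvable_zpowers x)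
      (mem_zpowers x) (le_normalizer hy)
  have hdvd : orderOf x ∣ p := h ▸ orderOf_dvd_card_solubilizer x
  rcases hp.eq_one_or_self_of_dvd _ hdvd with h1 | hop
  · have hx1 : x = 1 := orderOf_eq_one_iff.mp h1
    have huniv : solubilizer G x = Set.univ := by
      ext y
      simp only [Set.mem_univ, iff_true]
      exact solvable_closure_of_mem_normalizer (zpowers y) (isSolvable_zpowers y)
        (by rw [hx1]; exact one_mem _) (le_normalizer (mem_zpowers y))
    rwa [huniv, Nat.card_univ] at h
  · set P : Subgroup G := zpowers x with hPdef
    have hcardP : Nat.card P = p := by rw [hPdef, Nat.card_zpowers, hop]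
    have hSolP : solubilizer G x = (P : Set G) := by
      refine (Set.eq_of_subset_of_ncard_le (fun y hy => hzp y hy) ?_ (Set.toFinite _)).symm
      rw [← Nat.card_coe_set_eq, ← Nat.card_coe_set_eq, h]
      exact le_of_eq hcardP.symm
    have hNP : normalizer (P : Set G) = P := by
      refine le_antisymm (fun y hy => ?_) le_normalizer
      have hmem : y ∈ solubilizer G x := solvable_closure_of_mem_normalizer P
        (isSolvable_zpowers x) (mem_zpowers x) hy
      rwa [hSolP] at hmem
    have hPp : IsPGroup p P := IsPGroup.of_card (by rw [hcardP, pow_one])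
    obtain ⟨S, hPS⟩ := hPp.exists_le_sylow
    have hSP : (S : Subgroup G) = P := by
      refine le_antisymm (fun s hs => ?_) hPS
      haveI hSnil : Group.IsSolvable ↥(S : Subgroup G) := by
        haveI := (S.isPGroup').isNilpotent
        infer_instance
      have hle : Subgroup.closure ({x, s} : Set G) ≤ (S : Subgroup G) := by
        rw [closure_le]
        exact Set.insert_subset_iff.mpr ⟨hPS (mem_zpowers x), Set.singleton_subset_iff.mpr hs⟩
      have hmem : s ∈ solubilizer G x := isSolvable_of_le' hle
      rwa [hSolP] at hmem
    have hcent : normalizer ((S : Subgroup G) : Set G) ≤ Subgroup.centralizer (S : Set G) := by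
      intro g hg
      rw [Subgroup.mem_centralizer_iff]
      intro a ha
      rw [hSP] at hg
      rw [hNP] at hg
      have haP : a ∈ P := by
        have : a ∈ (S : Subgroup G) := ha
        rwa [hSP] at this
      obtain ⟨m, rfl⟩ := hg
      obtain ⟨n, rfl⟩ := haP
      exact Commute.zpow_zpow (Commute.refl x) n m
    set K : Subgroup G := (MonoidHom.transferSylow S hcent).ker with hKdef
    have hcompl : K.IsComplement' (S : Subgroup G) :=
      MonoidHom.ker_transferSylow_isComplement' S hcent
    haveI hKnormal : K.Normal := MonoidHom.normal_ker _
    have hcardG : Nat.card K * p = Nat.card G := by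
      have hm := hcompl.card_mul
      rwa [show Nat.card ↥(S : Subgroup G) = p from by rw [hSP]; exact hcardP] at hm
    have key : ∀ g : G, orderOf g = p → ∃ c : G, MulAut.conj c • zpowers g = P := by
      intro g hg
      have hgp : IsPGroup p (zpowers g) :=
        IsPGroup.of_card (by rw [Nat.card_zpowers, hg, pow_one])
      obtain ⟨S₂, hgS₂⟩ := hgp.exists_le_sylow
      have hcard₂ : Nat.card ↥(S₂ : Subgroup G) = p := by
        rw [S₂.card_eq_multiplicity, ← S.card_eq_multiplicity, hSP]
        exact hcardP
      have hzS₂ : zpowers g = (S₂ : Subgroup G) :=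
        Subgroup.eq_of_le_of_card_ge hgS₂
          (by rw [hcard₂, Nat.card_zpowers, hg])
      obtain ⟨c, hc⟩ := MulAction.exists_smul_eq G S₂ S
      refine ⟨c, ?_⟩
      rw [hzS₂, ← hSP, ← hc, Sylow.coe_subgroup_smul]
    have hpK : ¬ p ∣ Nat.card K := by
      intro hpk
      obtain ⟨k0, hk0⟩ := exists_prime_orderOf_dvd_card' (G := ↥K) p hpk
      have hog : orderOf ((k0 : G)) = p := by
        rw [← hk0]
        exact orderOf_injective K.subtype K.subtype_injective k0
      obtain ⟨c, hc⟩ := key _ hog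
      have hPK : P ≤ K := by
        have hmono : MulAut.conj c • zpowers (k0 : G) ≤ MulAut.conj c • K :=
          Subgroup.pointwise_smul_le_pointwise_smul_iff.mpr (zpowers_le.mpr k0.2)
        rw [Subgroup.Normal.conj_smul_eq_self c K] at hmono
        exact hc ▸ hmono
      have hxbot : x ∈ K ⊓ (S : Subgroup G) := by
        rw [hSP]
        exact ⟨hPK (mem_zpowers x), mem_zpowers x⟩
      rw [disjoint_iff.mp hcompl.disjoint, Subgroup.mem_bot] at hxbot
      rw [hxbot, orderOf_one] at hop
      exact hp.one_lt.ne' hop.symm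
    have hK1 : Nat.card K = 1 := by
      by_contra hne
      obtain ⟨q, hq, hqd⟩ := Nat.exists_prime_and_dvd hne
      haveI : Fact q.Prime := ⟨hq⟩
      obtain ⟨Q⟩ : Nonempty (Sylow q ↥K) := inferInstance
      set Q' : Subgroup G := Subgroup.map K.subtype (Q : Subgroup ↥K) with hQ'def
      have hQ'K : Q' ≤ K := by
        rw [hQ'def]
        exact Subgroup.map_subtype_le _
      have hcardQ' : Nat.card Q' = Nat.card (Q : Subgroup ↥K) :=
        (Nat.card_congr (Subgroup.equivMapOfInjective _ _ K.subtype_injective).toEquiv).symm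
      have hqQ' : q ∣ Nat.card Q' := by
        rw [hcardQ', Q.card_eq_multiplicity]
        refine dvd_pow_self q ?_
        have h0 : Nat.card ↥K ≠ 0 := Nat.card_pos.ne'
        exact (Nat.Prime.factorization_pos_of_dvd hq h0 hqd).ne'
      have hFr := Sylow.normalizer_sup_eq_top (p := q) (N := K) Q
      set M : Subgroup G := normalizer (Q' : Set G) with hMdef
      have hFr' : M ⊔ K = ⊤ := hFr
      have hpM : p ∣ Nat.card M := by
        have hsurj : Function.Surjective ((QuotientGroup.mk' K).comp M.subtype) := by
          intro z
          obtain ⟨g, rfl⟩ := QuotientGroup.mk'_surjective K z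
          have hg : g ∈ (↑(M ⊔ K) : Set G) := by
            rw [hFr']
            trivial
          rw [Subgroup.mul_normal] at hg
          obtain ⟨m, hm, k, hk, rfl⟩ := hg
          refine ⟨⟨m, hm⟩, ?_⟩
          simp only [MonoidHom.comp_apply, Subgroup.coe_subtype, QuotientGroup.mk'_apply]
          rw [eq_comm, QuotientGroup.eq]
          simpa using hk
        have hquot : Nat.card (G ⧸ K) = p := by
          have h2 := Subgroup.card_eq_card_quotient_mul_card_subgroup K
          have hKpos : 0 < Nat.card K := Nat.card_pos
          have h3 : Nat.card K * p = Nat.card (G ⧸ K) * Nat.card K := hcardG.trans h2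
          rw [mul_comm (Nat.card (G ⧸ K)) (Nat.card K)] at h3
          exact (Nat.eq_of_mul_eq_mul_left hKpos h3).symm
        have hdvd2 := Subgroup.card_dvd_of_surjective _ hsurj
        rwa [hquot] at hdvd2
      obtain ⟨g0, hg0⟩ := exists_prime_orderOf_dvd_card' (G := ↥M) p hpM
      have hg0' : orderOf ((g0 : G)) = p := by
        rw [← hg0]
        exact orderOf_injective M.subtype M.subtype_injective g0
      obtain ⟨c, hc⟩ := key _ hg0'
      have hzpc : zpowers (c * (g0 : G) * c⁻¹) = P := by
        rw [← hc, Subgroup.pointwise_smul_def]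
        exact (MonoidHom.map_zpowers (MulAut.conj c).toMonoidHom (g0 : G)).symm
      have hQ'le : Q' ≤ zpowers (g0 : G) := by
        intro w hw
        have hQ'sol : Group.IsSolvable ↥Q' := by
          haveI := ((Q.isPGroup').map K.subtype).isNilpotent
          infer_instance
        have hsolv : Group.IsSolvable ↥(Subgroup.closure ({(g0 : G), w} : Set G)) := by
          have hs := solvable_closure_of_mem_normalizer Q' hQ'sol hw g0.2
          rwa [Set.pair_comm] at hs
        have hwsol : w ∈ solubilizer G (g0 : G) := hsolv
        have hconj : c * w * c⁻¹ ∈ solubilizer G (c * (g0 : G) * c⁻¹) :=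
          mem_solubilizer_conj hwsol
        rw [solubilizer_congr (hzpc.trans hPdef), hSolP] at hconj
        have hmem : c * w * c⁻¹ ∈ zpowers (c * (g0 : G) * c⁻¹) := by
          rw [hzpc]
          exact hconj
        have hmap : Subgroup.map (MulAut.conj c).toMonoidHom (zpowers (g0 : G))
            = zpowers (c * (g0 : G) * c⁻¹) := by
          rw [MonoidHom.map_zpowers]
          simp [MulAut.conj_apply]
        rw [← hmap] at hmem
        obtain ⟨w', hw', hww⟩ := hmem
        have hww' : w' = w := by
          have hc2 : c * w' * c⁻¹ = c * w * c⁻¹ := by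
            simpa [MulAut.conj_apply, mul_assoc] using hww
          exact mul_left_cancel (mul_right_cancel hc2)
        rwa [← hww']
      have hdvd3 : Nat.card Q' ∣ p := by
        have := Subgroup.card_dvd_of_le hQ'le
        rwa [Nat.card_zpowers, hg0'] at this
      have hqp : q = p := (Nat.prime_dvd_prime_iff_eq hq hp).mp (hqQ'.trans hdvd3)
      exact hpK (hqp ▸ hqd)
    rw [← hcardG, hK1, one_mul]
end

section
/- Let G be a finite group and x ∈ G. Then either N_G(⟨x⟩) = Sol_G(x), or |Sol_G(x)| > ℓ·|x|, where ℓ is the minimum of the indices |⟨x⟩ : ⟨x⟩ ∩ ⟨x⟩^y| taken over all y ∉ N_G(⟨x⟩). -/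
/-- If `y` normalizes `⟨x⟩`, then `⟨x, y⟩` is solvable. -/
lemma solvable_of_mem_normalizer {G : Type*} [Group G] (x y : G)
    (hy : y ∈ Subgroup.normalizer (Subgroup.zpowers x : Set G)) :
    IsSolvable ↥(Subgroup.closure {x, y}) := by
  set A := Subgroup.zpowers x with hA
  set H := Subgroup.closure {x, y} with hHdef
  have hxH : x ∈ H := Subgroup.subset_closure (by simp)
  have hyH : y ∈ H := Subgroup.subset_closure (by simp)
  have hHN : H ≤ Subgroup.normalizer (A : Set G) := by
    rw [hHdef]
    refine Subgroup.closure_le _ |>.mpr ?_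
    intro z hz
    rcases hz with h | h
    · rw [h]; exact Subgroup.le_normalizer (Subgroup.mem_zpowers x)
    · rw [Set.mem_singleton_iff] at h; rw [h]; exact hy
  set K := A.subgroupOf H with hK
  haveI hKnormal : K.Normal := by
    constructor
    intro k hk g
    have hg : (g : G) ∈ Subgroup.normalizer (A : Set G) := hHN g.2
    rw [Subgroup.mem_normalizer_iff] at hg
    have : (k : G) ∈ A := hk
    simpa [K, Subgroup.mem_subgroupOf] using (hg (k : G)).mp this
  haveI hKsolv : IsSolvable ↥K := by
    apply isSolvable_of_comm
    rintro ⟨⟨a, haH⟩, ha⟩ ⟨⟨b, hbH⟩, hb⟩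
    have ha' : a ∈ A := ha
    have hb' : b ∈ A := hb
    obtain ⟨m, rfl⟩ := ha'
    obtain ⟨n, rfl⟩ := hb'
    ext
    exact ((Commute.refl x).zpow_zpow m n).eq
  set π := QuotientGroup.mk' K with hπ
  set y' : ↥H := ⟨y, hyH⟩ with hy'
  have hgen : ∀ q : ↥H ⧸ K, q ∈ Subgroup.zpowers (π y') := by
    intro q
    obtain ⟨h, rfl⟩ := QuotientGroup.mk'_surjective K q
    set T := ((Subgroup.zpowers (π y')).comap π).map H.subtype with hT
    have hxT : x ∈ T := by
      refine ⟨⟨x, hxH⟩, ?_, rfl⟩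
      have : π ⟨x, hxH⟩ = 1 := by
        rw [hπ, QuotientGroup.mk'_apply, QuotientGroup.eq_one_iff]
        exact Subgroup.mem_zpowers x
      simp only [SetLike.mem_coe, Subgroup.mem_comap, this]
      exact Subgroup.one_mem _
    have hyT : y ∈ T := ⟨y', Subgroup.mem_zpowers _, rfl⟩
    have hHT : H ≤ T := by
      rw [hHdef]
      refine Subgroup.closure_le _ |>.mpr ?_
      intro z hz
      rcases hz with h | h
      · rw [h]; exact hxT
      · rw [Set.mem_singleton_iff] at h; rw [h]; exact hyT
    obtain ⟨t, htmem, hteq⟩ := hHT h.2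
    have : t = h := Subtype.ext hteq
    rw [← this]
    exact htmem
  haveI hQsolv : IsSolvable (↥H ⧸ K) := by
    apply isSolvable_of_comm
    intro a b
    obtain ⟨m, rfl⟩ := hgen a
    obtain ⟨n, rfl⟩ := hgen b
    exact ((Commute.refl (π y')).zpow_zpow m n).eq
  exact solvable_of_ker_le_range (hG' := hKsolv) (hG'' := hQsolv) K.subtype π
    (by rw [QuotientGroup.ker_mk', Subgroup.range_subtype])

theorem stmt9 {G : Type*} [Group G] [Finite G] (x : G)
    (ℓ : ℕ)
    (hℓ : ℓ = sInf {n | ∃ y : G, y ∉ Subgroup.normalizer (Subgroup.zpowers x : Set G) ∧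
      n = (Subgroup.zpowers (y⁻¹ * x * y)).relIndex (Subgroup.zpowers x)}) :
    (Subgroup.normalizer (Subgroup.zpowers x : Set G) : Set G) = solubilizer G x ∨
      Nat.card (solubilizer G x) > ℓ * orderOf x := by
  set A := Subgroup.zpowers x with hA
  set N := Subgroup.normalizer (A : Set G) with hN
  by_cases h : (N : Set G) = solubilizer G x
  · exact Or.inl h
  right
  -- N ⊆ Sol
  have hsub : (N : Set G) ⊆ solubilizer G x := fun y hy =>
    solvable_of_mem_normalizer x y hy
  obtain ⟨y, hySol, hyN⟩ := Set.exists_of_ssubset (hsub.ssubset_of_ne h)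
  have hySol' : IsSolvable ↥(Subgroup.closure {x, y}) := hySol
  set c := y * x * y⁻¹ with hc
  set B := Subgroup.zpowers c with hB
  set D := B.subgroupOf A with hD
  -- ℓ ≤ D.index
  have hidx : ℓ ≤ D.index := by
    rw [hℓ]
    apply Nat.sInf_le
    refine ⟨y⁻¹, ?_, ?_⟩
    · intro hmem
      exact hyN (by simpa using N.inv_mem hmem)
    · simp only [inv_inv]
      rfl
  -- the injection
  have hAle : A ≤ N := Subgroup.le_normalizer
  haveI hAsolv : IsSolvable ↥A := by
    apply isSolvable_of_comm
    rintro ⟨a, ha⟩ ⟨b, hb⟩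
    obtain ⟨m, rfl⟩ := ha
    obtain ⟨n, rfl⟩ := hb
    ext
    exact ((Commute.refl x).zpow_zpow m n).eq
  have hmemA : ∀ a : ↥A, (a : G) ∈ solubilizer G x := by
    intro a
    have hle : Subgroup.closure {x, (a : G)} ≤ A := by
      refine Subgroup.closure_le _ |>.mpr ?_
      intro z hz
      rcases hz with h | h
      · rw [h]; exact Subgroup.mem_zpowers x
      · rw [Set.mem_singleton_iff] at h; rw [h]; exact a.2
    exact solvable_of_solvable_injective (Subgroup.inclusion_injective hle)
  have hmemAyA : ∀ a b : ↥A, (a : G) * y * (b : G) ∈ solubilizer G x := by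
    intro a b
    have hle : Subgroup.closure {x, (a : G) * y * (b : G)} ≤
        Subgroup.closure {x, y} := by
      refine Subgroup.closure_le _ |>.mpr ?_
      have hxc : x ∈ Subgroup.closure {x, y} := Subgroup.subset_closure (by simp)
      have hyc : y ∈ Subgroup.closure {x, y} := Subgroup.subset_closure (by simp)
      have hac : ∀ z : ↥A, (z : G) ∈ Subgroup.closure {x, y} := by
        intro z
        obtain ⟨m, hm⟩ := z.2
        rw [← hm]
        exact Subgroup.zpow_mem _ hxc m
      intro z hz
      rcases hz with h | h
      · rw [h]; exact hxc
      · rw [Set.mem_singleton_iff] at h; rw [h]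
        exact Subgroup.mul_mem _ (Subgroup.mul_mem _ (hac a) hyc) (hac b)
    haveI := hySol'
    exact @solvable_of_solvable_injective _ _ _ _ (Subgroup.inclusion hle) (Subgroup.inclusion_injective hle) hySol'
  set f : (↥A ⧸ D) × ↥A ⊕ ↥A → ↥(solubilizer G x) :=
    fun z => match z with
    | Sum.inl (q, a) => ⟨(q.out : G) * y * (a : G), hmemAyA q.out a⟩
    | Sum.inr a => ⟨(a : G), hmemA a⟩ with hf
  have hyA : y ∉ A := fun hyA => hyN (hAle hyA)
  have hconj : ∀ a b : ↥A, ((b : G))⁻¹ * (a : G) ∈ B →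
      ((b)⁻¹ * a : ↥A) ∈ D := by
    intro a b hab
    simpa [hD, Subgroup.mem_subgroupOf] using hab
  have hfinj : Function.Injective f := by
    rintro (⟨q₁, a₁⟩ | a₁) (⟨q₂, a₂⟩ | a₂) heq
    · have heq' : (q₁.out : G) * y * (a₁ : G) = (q₂.out : G) * y * (a₂ : G) :=
        congrArg Subtype.val heq
      have hmem : ((q₂.out : G))⁻¹ * (q₁.out : G) = y * ((a₂ : G) * ((a₁ : G))⁻¹) * y⁻¹ := by
        have h2 : (q₁.out : G) = (q₂.out : G) * (y * ((a₂ : G) * ((a₁ : G))⁻¹) * y⁻¹) := by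
          rw [show (q₂.out : G) * (y * ((a₂ : G) * ((a₁ : G))⁻¹) * y⁻¹) =
            ((q₂.out : G) * y * (a₂ : G)) * (((a₁ : G))⁻¹ * y⁻¹) by group, ← heq']
          group
        rw [h2]; group
      have hprod : ((a₂ : G) * ((a₁ : G))⁻¹) ∈ A := A.mul_mem a₂.2 (A.inv_mem a₁.2)
      obtain ⟨k, hk⟩ := hprod
      have hmemB : ((q₂.out : G))⁻¹ * (q₁.out : G) ∈ B := by
        rw [hmem]
        have hk' : (a₂ : G) * ((a₁ : G))⁻¹ = x ^ k := hk.symm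
        rw [hk']
        refine ⟨k, ?_⟩
        show c ^ k = y * x ^ k * y⁻¹
        rw [hc]
        exact conj_zpow
      have hq : q₂ = q₁ := by
        rw [← Quotient.out_eq q₁, ← Quotient.out_eq q₂]
        exact (QuotientGroup.eq).mpr (hconj (Quotient.out q₁) (Quotient.out q₂) hmemB)
      subst hq
      have ha : (a₁ : G) = (a₂ : G) :=
        mul_left_cancel (a := ((Quotient.out q₂ : ↥A) : G) * y) (by simpa [mul_assoc] using heq')
      rw [Subtype.ext ha]
    · exfalso
      have heq' : (q₁.out : G) * y * (a₁ : G) = (a₂ : G) := congrArg Subtype.val heq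
      have : y = ((q₁.out : G))⁻¹ * (a₂ : G) * ((a₁ : G))⁻¹ := by
        rw [← heq']; group
      apply hyA
      rw [this]
      exact A.mul_mem (A.mul_mem (A.inv_mem q₁.out.2) a₂.2) (A.inv_mem a₁.2)
    · exfalso
      have heq' : (a₁ : G) = (q₂.out : G) * y * (a₂ : G) := congrArg Subtype.val heq
      have : y = ((q₂.out : G))⁻¹ * (a₁ : G) * ((a₂ : G))⁻¹ := by
        rw [heq']; group
      apply hyA
      rw [this]
      exact A.mul_mem (A.mul_mem (A.inv_mem q₂.out.2) a₁.2) (A.inv_mem a₂.2)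
    · simp only [hf, Subtype.mk.injEq] at heq
      rw [Subtype.ext heq]
  have hcard : Nat.card ((↥A ⧸ D) × ↥A ⊕ ↥A) ≤ Nat.card (solubilizer G x) :=
    Nat.card_le_card_of_injective f hfinj
  have hcardsum : Nat.card ((↥A ⧸ D) × ↥A ⊕ ↥A) = D.index * orderOf x + orderOf x := by
    rw [Nat.card_sum, Nat.card_prod, Nat.card_zpowers]
    rfl
  have hordpos : 0 < orderOf x := orderOf_pos x
  calc ℓ * orderOf x < ℓ * orderOf x + orderOf x := Nat.lt_add_of_pos_right hordpos
    _ ≤ D.index * orderOf x + orderOf x := by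
        exact Nat.add_le_add_right (Nat.mul_le_mul_right _ hidx) _
    _ = Nat.card ((↥A ⧸ D) × ↥A ⊕ ↥A) := hcardsum.symm
    _ ≤ Nat.card (solubilizer G x) := hcard
end

section
/- Let G be a finite group, x ∈ G, and H a subgroup with C_G(x) ≤ H ≤ N_G(⟨x⟩). If ℓ_H is the number of orbits of H acting by conjugation on Sol_G(x), and H∖{1} is the union of the N_G(⟨x⟩)-conjugacy classes of g_1,…,g_ℓ, then |H|·ℓ_H = |Sol_G(x)| + |N_G(⟨x⟩)|·Σ_{i=1}^{ℓ} n(g_i, x), where n(g, x) := |Sol_{C_G(g)}(x)| / |N_{C_G(g)}(⟨x⟩)|. -/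
/-- The number of orbits of the conjugation action of a subgroup `S` on a set `T`. -/
noncomputable def numConjOrbits {G : Type*} [Group G] (S : Subgroup G) (T : Set G) : ℕ :=
  Nat.card {O : Set G // ∃ a ∈ T, O = {b | ∃ s ∈ S, b = s⁻¹ * a * s}}

/-- `n(g, x) = |Sol_{C_G(g)}(x)| / |N_{C_G(g)}(⟨x⟩)|` as a rational number. -/
noncomputable def nqt {G : Type*} [Group G] (g x : G) : ℚ :=
  (Nat.card ↥(solubilizer G x ∩ (Subgroup.centralizer {g} : Set G)) : ℚ) /
    (Nat.card ↥((Subgroup.normalizer (Subgroup.zpowers x : Set G)) ⊓ Subgroup.centralizer {g}) : ℚ)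

open Subgroup MulAction

lemma zpowers_conj_eq {G : Type*} [Group G] (t x : G) (ht : t ∈ (normalizer (zpowers x : Set G))) :
    zpowers (t * x * t⁻¹) = zpowers x := by
  have h := MonoidHom.map_zpowers (MulAut.conj t).toMonoidHom x
  simp only [MulEquiv.coe_toMonoidHom, MulAut.conj_apply] at h
  rw [← h]
  ext z
  simp only [Subgroup.mem_map, MulEquiv.coe_toMonoidHom, MulAut.conj_apply]
  rw [Subgroup.mem_normalizer_iff] at ht
  constructor
  · rintro ⟨w, hw, rfl⟩; exact (ht w).mp hw
  · intro hz
    refine ⟨t⁻¹ * z * t, ?_, by group⟩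
    apply (ht (t⁻¹ * z * t)).mpr
    convert hz using 1
    group

lemma closure_pair {G : Type*} [Group G] (a b : G) :
    closure {a, b} = zpowers a ⊔ zpowers b := by
  rw [zpowers_eq_closure, zpowers_eq_closure, ← Subgroup.closure_union]; rfl

lemma sol_conj {G : Type*} [Group G] {x t : G} (ht : t ∈ (normalizer (zpowers x : Set G)))
    {y : G} (hy : y ∈ solubilizer G x) : t * y * t⁻¹ ∈ solubilizer G x := by
  have key : closure {x, t * y * t⁻¹} =
      (closure {x, y}).map (MulAut.conj t).toMonoidHom := by
    rw [MonoidHom.map_closure]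
    have : (MulAut.conj t).toMonoidHom '' {x, y} = {t * x * t⁻¹, t * y * t⁻¹} := by
      simp [Set.image_insert_eq, MulAut.conj_apply]
    rw [this, closure_pair, closure_pair, zpowers_conj_eq t x ht]
  have hs : IsSolvable ↥(closure {x, y}) := hy
  have : IsSolvable ↥((closure {x, y}).map (MulAut.conj t).toMonoidHom) := by
    have e := Subgroup.equivMapOfInjective (closure {x, y}) (MulAut.conj t).toMonoidHom
      (MulEquiv.injective _)
    haveI : Group.IsSolvable ↥(closure {x, y}) := hs
    exact solvable_of_surjective (f := e.toMonoidHom) e.surjective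
  show IsSolvable ↥(Subgroup.closure {x, t * y * t⁻¹})
  rw [key]
  exact this

lemma card_class_mul {G : Type*} [Group G] [Finite G] (S : Subgroup G) (a : G) :
    Nat.card {b | ∃ t ∈ S, b = t⁻¹ * a * t} *
      Nat.card ↥(S ⊓ Subgroup.centralizer {a}) = Nat.card S := by
  letI act : MulAction ↥S G :=
    MulAction.compHom G (ConjAct.toConjAct.toMonoidHom.comp S.subtype)
  have hsmul : ∀ (t : ↥S) (b : G), t • b = (t : G) * b * (t : G)⁻¹ := by
    intro t b; rfl
  have horb : {b | ∃ t ∈ S, b = t⁻¹ * a * t} = orbit ↥S a := by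
    ext b
    simp only [Set.mem_setOf_eq, MulAction.mem_orbit_iff]
    constructor
    · rintro ⟨t, ht, rfl⟩
      exact ⟨⟨t⁻¹, S.inv_mem ht⟩, by rw [hsmul]; group⟩
    · rintro ⟨⟨t, ht⟩, rfl⟩
      exact ⟨t⁻¹, S.inv_mem ht, by rw [hsmul]; group⟩
  have hstab : Nat.card (stabilizer ↥S a) = Nat.card ↥(S ⊓ Subgroup.centralizer {a}) := by
    apply Nat.card_congr
    refine ⟨fun t => ⟨t.1.1, t.1.2, ?_⟩, fun u => ⟨⟨u.1, u.2.1⟩, ?_⟩, fun t => rfl, fun u => rfl⟩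
    · show (t.1 : G) ∈ Subgroup.centralizer {a}
      rw [Subgroup.mem_centralizer_singleton_iff]
      have := t.2
      rw [MulAction.mem_stabilizer_iff, hsmul] at this
      rw [mul_inv_eq_iff_eq_mul] at this
      exact this
    · rw [MulAction.mem_stabilizer_iff, hsmul, mul_inv_eq_iff_eq_mul]
      show (u : G) * a = a * (u : G)
      exact Subgroup.mem_centralizer_singleton_iff.mp u.2.2
  rw [horb, ← hstab]
  have := Subgroup.card_eq_card_quotient_mul_card_subgroup (stabilizer ↥S a)
  rw [Nat.card_congr (orbitEquivQuotientStabilizer ↥S a), ← this]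

lemma burnside_sol {G : Type*} [Group G] [Finite G] (x : G) (H : Subgroup G) [Fintype ↥H]
    (hHN : H ≤ (normalizer (zpowers x : Set G))) :
    Nat.card H * numConjOrbits H (solubilizer G x) =
      ∑ h : H, Nat.card ↥(solubilizer G x ∩ (Subgroup.centralizer {(h : G)} : Set G)) := by
  classical
  set Sol := solubilizer G x with hSol
  letI act : MulAction ↥H ↥Sol :=
  { smul := fun h y => ⟨(h : G) * y * (h : G)⁻¹, sol_conj (hHN h.2) y.2⟩
    one_smul := fun y => by
      ext
      show ((1 : ↥H) : G) * y * ((1 : ↥H) : G)⁻¹ = y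
      simp
    mul_smul := fun a b y => by
      ext
      show ((a * b : ↥H) : G) * y * ((a * b : ↥H) : G)⁻¹ =
        (a : G) * ((b : G) * y * (b : G)⁻¹) * (a : G)⁻¹
      push_cast
      group }
  have hsmul : ∀ (h : ↥H) (y : ↥Sol), ((h • y : ↥Sol) : G) = (h : G) * y * (h : G)⁻¹ :=
    fun _ _ => rfl
  letI : Fintype ↥Sol := Fintype.ofFinite _
  letI : Fintype (orbitRel.Quotient ↥H ↥Sol) := Fintype.ofFinite _
  have hnum : numConjOrbits H Sol = Fintype.card (orbitRel.Quotient ↥H ↥Sol) := by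
    rw [← Nat.card_eq_fintype_card]
    apply Nat.card_congr
    apply Equiv.symm
    refine Equiv.ofBijective
      (fun q => ⟨Quotient.liftOn q (fun y => {b | ∃ s ∈ H, b = s⁻¹ * (y : G) * s}) ?_, ?_⟩)
      ⟨?_, ?_⟩
    · rintro y z (hyz : y ∈ orbit ↥H z)
      obtain ⟨h, rfl⟩ := hyz
      ext b
      simp only [Set.mem_setOf_eq, hsmul]
      constructor
      · rintro ⟨s, hs, rfl⟩
        exact ⟨(h : G)⁻¹ * s, H.mul_mem (H.inv_mem h.2) hs, by group⟩
      · rintro ⟨s, hs, rfl⟩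
        exact ⟨(h : G) * s, H.mul_mem h.2 hs, by group⟩
    · obtain ⟨y⟩ := q
      exact ⟨(y : G), y.2, rfl⟩
    · rintro ⟨y⟩ ⟨z⟩ hq
      simp only [Subtype.mk.injEq] at hq
      have this : (y : G) ∈ {b | ∃ s ∈ H, b = s⁻¹ * (y : G) * s} := ⟨1, H.one_mem, by group⟩
      have hq' : {b | ∃ s ∈ H, b = s⁻¹ * (y : G) * s} =
          {b | ∃ s ∈ H, b = s⁻¹ * (z : G) * s} := hq
      rw [hq'] at this
      obtain ⟨s, hs, hy⟩ := this
      apply Quotient.sound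
      refine ⟨⟨s⁻¹, H.inv_mem hs⟩, ?_⟩
      ext
      rw [hsmul]
      show s⁻¹ * (z : G) * s⁻¹⁻¹ = y
      rw [hy]; group
    · rintro ⟨O, a, ha, rfl⟩
      exact ⟨⟦⟨a, ha⟩⟧, rfl⟩
  have hfix : ∀ h : ↥H, Nat.card (fixedBy ↥Sol h) =
      Nat.card ↥(Sol ∩ (Subgroup.centralizer {(h : G)} : Set G)) := by
    intro h
    apply Nat.card_congr
    refine ⟨fun y => ⟨((y : ↥Sol) : G), Set.mem_inter (y : ↥Sol).2 ?_,⟩,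
      fun z => ⟨⟨z.1, z.2.1⟩, ?_⟩, fun y => rfl, fun z => rfl⟩
    · rw [SetLike.mem_coe, Subgroup.mem_centralizer_singleton_iff]
      have hy := y.2
      rw [mem_fixedBy] at hy
      have hy2 := congrArg (Subtype.val) hy
      rw [hsmul, mul_inv_eq_iff_eq_mul] at hy2
      exact hy2.symm
    · rw [mem_fixedBy]
      ext
      rw [hsmul, mul_inv_eq_iff_eq_mul]
      have hz := z.2.2
      rw [SetLike.mem_coe, Subgroup.mem_centralizer_singleton_iff] at hz
      exact hz.symm
  letI : ∀ h : ↥H, Fintype (fixedBy ↥Sol h) := fun h => Fintype.ofFinite _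
  have hb := MulAction.sum_card_fixedBy_eq_card_orbits_mul_card_group ↥H ↥Sol
  have key : ∑ h : ↥H, Nat.card (fixedBy ↥Sol h) =
      Fintype.card (orbitRel.Quotient ↥H ↥Sol) * Fintype.card ↥H := by
    rw [← hb]
    exact Finset.sum_congr rfl fun h _ => Nat.card_eq_fintype_card
  rw [hnum, Nat.card_eq_fintype_card, mul_comm, ← key]
  symm
  exact Finset.sum_congr rfl fun h _ => (hfix h).symm

lemma F_conj {G : Type*} [Group G] {x t : G} (ht : t ∈ (normalizer (zpowers x : Set G))) (a : G) :
    Nat.card ↥(solubilizer G x ∩ (Subgroup.centralizer {t⁻¹ * a * t} : Set G)) =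
      Nat.card ↥(solubilizer G x ∩ (Subgroup.centralizer {a} : Set G)) := by
  have himg : solubilizer G x ∩ (Subgroup.centralizer {t⁻¹ * a * t} : Set G) =
      (fun y => t⁻¹ * y * t) '' (solubilizer G x ∩ (Subgroup.centralizer {a} : Set G)) := by
    ext y
    constructor
    · rintro ⟨hy1, hy2⟩
      refine ⟨t * y * t⁻¹, ⟨sol_conj ht hy1, ?_⟩, by group⟩
      rw [SetLike.mem_coe, Subgroup.mem_centralizer_singleton_iff]
      rw [SetLike.mem_coe, Subgroup.mem_centralizer_singleton_iff] at hy2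
      have : t * (y * (t⁻¹ * a * t)) * t⁻¹ = t * (t⁻¹ * a * t * y) * t⁻¹ := by rw [hy2]
      calc t * y * t⁻¹ * a = t * (y * (t⁻¹ * a * t)) * t⁻¹ := by group
        _ = t * (t⁻¹ * a * t * y) * t⁻¹ := this
        _ = a * (t * y * t⁻¹) := by group
    · rintro ⟨z, ⟨hz1, hz2⟩, rfl⟩
      refine ⟨?_, ?_⟩
      · have := sol_conj ((normalizer (zpowers x : Set G)).inv_mem ht) hz1
        simpa using this
      · rw [SetLike.mem_coe, Subgroup.mem_centralizer_singleton_iff]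
        rw [SetLike.mem_coe, Subgroup.mem_centralizer_singleton_iff] at hz2
        calc t⁻¹ * z * t * (t⁻¹ * a * t) = t⁻¹ * (z * a) * t := by group
          _ = t⁻¹ * (a * z) * t := by rw [hz2]
          _ = t⁻¹ * a * t * (t⁻¹ * z * t) := by group
  rw [himg]
  apply Nat.card_congr
  exact (Equiv.Set.image _ _ (fun y z h => by
    have : t * (t⁻¹ * y * t) * t⁻¹ = t * (t⁻¹ * z * t) * t⁻¹ := by rw [h]
    simpa [mul_assoc] using this)).symm

lemma centralizer_one {G : Type*} [Group G] : Subgroup.centralizer {(1 : G)} = ⊤ := by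
  ext z; simp [Subgroup.mem_centralizer_singleton_iff]

theorem stmt10 {G : Type*} [Group G] [Finite G] (x : G) (H : Subgroup G)
    (hCH : Subgroup.centralizer {x} ≤ H)
    (hHN : H ≤ (Subgroup.normalizer (Subgroup.zpowers x : Set G)))
    (ℓ : ℕ) (g : Fin ℓ → G)
    (hg : ∀ i, g i ∈ H ∧ g i ≠ 1)
    (hcover : (H : Set G) \ {1} =
      ⋃ i, {h | ∃ t ∈ (Subgroup.normalizer (Subgroup.zpowers x : Set G)), h = t⁻¹ * g i * t})
    (hdisj : ∀ i j, i ≠ j →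
      ¬ ∃ t ∈ (Subgroup.normalizer (Subgroup.zpowers x : Set G)), g j = t⁻¹ * g i * t) :
    (Nat.card H : ℚ) * numConjOrbits H (solubilizer G x) =
      (Nat.card (solubilizer G x) : ℚ) +
        (Nat.card (Subgroup.normalizer (Subgroup.zpowers x : Set G)) : ℚ) * ∑ i, nqt (g i) x := by
  cases nonempty_fintype G
  classical
  letI : Fintype ↥H := Fintype.ofFinite _
  set F : G → ℕ := fun h => Nat.card ↥(solubilizer G x ∩ (Subgroup.centralizer {h} : Set G))
    with hF
  have hburn := burnside_sol x H hHN
  -- sum over the subgroup as a Finset of G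
  set Hfin : Finset G := Set.toFinset (H : Set G) with hHfin
  have hsum1 : ∑ h : H, F ↑h = ∑ h ∈ Hfin, F h := Finset.sum_set_coe _
  have h1H : (1 : G) ∈ Hfin := by rw [hHfin, Set.mem_toFinset]; exact H.one_mem
  have hsplit : ∑ h ∈ Hfin, F h = F 1 + ∑ h ∈ Hfin.erase 1, F h :=
    (Finset.add_sum_erase _ F h1H).symm
  have hF1 : F 1 = Nat.card (solubilizer G x) := by
    rw [hF]; simp [centralizer_one]
  set Cset : Fin ℓ → Set G :=
    fun i => {h | ∃ t ∈ (Subgroup.normalizer (Subgroup.zpowers x : Set G)), h = t⁻¹ * g i * t} with hCset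
  set Cfin : Fin ℓ → Finset G := fun i => Set.toFinset (Cset i) with hCfin
  have herase : Hfin.erase 1 = Finset.univ.biUnion Cfin := by
    ext b
    simp only [Finset.mem_erase, hHfin, Set.mem_toFinset, SetLike.mem_coe,
      Finset.mem_biUnion, Finset.mem_univ, true_and, hCfin]
    constructor
    · rintro ⟨hb1, hbH⟩
      have : b ∈ (H : Set G) \ {1} := ⟨hbH, hb1⟩
      rw [hcover] at this
      obtain ⟨s, ⟨i, rfl⟩, hbs⟩ := this
      exact ⟨i, hbs⟩
    · rintro ⟨i, hb⟩
      have : b ∈ (H : Set G) \ {1} := by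
        rw [hcover]
        exact Set.mem_iUnion.mpr ⟨i, hb⟩
      exact ⟨this.2, this.1⟩
  have hdisjf : ((Finset.univ : Finset (Fin ℓ)) : Set (Fin ℓ)).PairwiseDisjoint Cfin := by
    intro i _ j _ hij
    show Disjoint (Cfin i) (Cfin j)
    rw [Finset.disjoint_left]
    intro b hbi hbj
    rw [hCfin, Set.mem_toFinset] at hbi hbj
    obtain ⟨t, htN, rfl⟩ := hbi
    obtain ⟨s, hsN, hbs⟩ := hbj
    refine hdisj i j hij ⟨t * s⁻¹, mul_mem htN (inv_mem hsN), ?_⟩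
    have hgj : g j = s * (t⁻¹ * g i * t) * s⁻¹ := by rw [hbs]; group
    rw [hgj]; group
  have hbi : ∑ h ∈ Hfin.erase 1, F h = ∑ i, ∑ h ∈ Cfin i, F h := by
    rw [herase, Finset.sum_biUnion hdisjf]
  have hinner : ∀ i, ∑ h ∈ Cfin i, F h = (Cfin i).card * F (g i) := by
    intro i
    rw [Finset.sum_congr rfl (fun h hh => ?_), Finset.sum_const, smul_eq_mul]
    rw [hCfin, Set.mem_toFinset, hCset] at hh
    obtain ⟨t, htN, rfl⟩ := hh
    exact F_conj htN (g i)
  have hclasscard : ∀ i, (Cfin i).card = Nat.card ↥(Cset i) := by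
    intro i
    rw [hCfin, Set.toFinset_card, Nat.card_eq_fintype_card]
  -- put the ℕ identity together
  have hnat : Nat.card H * numConjOrbits H (solubilizer G x) =
      Nat.card (solubilizer G x) + ∑ i, Nat.card ↥(Cset i) * F (g i) := by
    rw [hburn, hsum1, hsplit, hF1, hbi]
    congr 1
    exact Finset.sum_congr rfl fun i _ => by rw [hinner i, hclasscard i]
  -- move to ℚ
  have hQ : (Nat.card H : ℚ) * numConjOrbits H (solubilizer G x) =
      (Nat.card (solubilizer G x) : ℚ) + ∑ i, (Nat.card ↥(Cset i) : ℚ) * F (g i) := by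
    exact_mod_cast congrArg (Nat.cast : ℕ → ℚ) hnat
  rw [hQ]
  congr 1
  rw [Finset.mul_sum]
  refine Finset.sum_congr rfl fun i _ => ?_
  have hD : (0 : ℚ) < (Nat.card ↥((Subgroup.normalizer (Subgroup.zpowers x : Set G)) ⊓
      Subgroup.centralizer {g i}) : ℚ) := by
    exact_mod_cast Nat.card_pos
  have hcc := card_class_mul ((Subgroup.normalizer (Subgroup.zpowers x : Set G))) (g i)
  have hccQ : (Nat.card ↥(Cset i) : ℚ) *
      (Nat.card ↥((Subgroup.normalizer (Subgroup.zpowers x : Set G)) ⊓ Subgroup.centralizer {g i}) : ℚ) =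
      (Nat.card (Subgroup.normalizer (Subgroup.zpowers x : Set G)) : ℚ) := by
    exact_mod_cast hcc
  rw [nqt, ← hccQ, mul_assoc, mul_div_assoc', mul_div_cancel_left₀ _ hD.ne']
end

section
/- Let G = KH be a Frobenius group with abelian kernel K and complement H, and let x be a nontrivial element of K. Then the number of orbits of C_G(x) acting by conjugation on Sol_G(x) = G equals |H| + ℓ·|N_G(⟨x⟩) : K|, where ℓ + 1 is the number of orbits of N_G(⟨x⟩)/C_G(x) acting on K. -/
section Aux

variable {G : Type*} [Group G]

/-- The conjugation orbit of `a` under the subgroup `S`. -/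
def convOrbit (S : Subgroup G) (a : G) : Set G := {b | ∃ s ∈ S, b = s⁻¹ * a * s}

lemma mem_convOrbit_self (S : Subgroup G) (a : G) : a ∈ convOrbit S a :=
  ⟨1, S.one_mem, by simp⟩

lemma convOrbit_eq_of_mem {S : Subgroup G} {a b : G} (h : b ∈ convOrbit S a) :
    convOrbit S b = convOrbit S a := by
  obtain ⟨t, ht, rfl⟩ := h
  ext c
  constructor
  · rintro ⟨s, hs, rfl⟩
    exact ⟨t * s, S.mul_mem ht hs, by group⟩
  · rintro ⟨s, hs, rfl⟩
    exact ⟨t⁻¹ * s, S.mul_mem (S.inv_mem ht) hs, by group⟩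

lemma numConjOrbits_def (S : Subgroup G) (T : Set G) :
    numConjOrbits S T = Nat.card {O : Set G // ∃ a ∈ T, O = convOrbit S a} := rfl

lemma convOrbit_one (S : Subgroup G) : convOrbit S (1 : G) = {1} := by
  ext b
  constructor
  · rintro ⟨s, hs, rfl⟩; simp
  · rintro rfl; exact ⟨1, S.one_mem, by simp⟩

/-- The partition of an invariant set into conjugation orbits. -/
noncomputable def orbitsEquiv (S : Subgroup G) (T : Set G)
    (hinv : ∀ a ∈ T, ∀ s ∈ S, s⁻¹ * a * s ∈ T) :
    T ≃ Σ O : {O : Set G // ∃ a ∈ T, O = convOrbit S a}, O.1 where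
  toFun a := ⟨⟨convOrbit S a.1, a.1, a.2, rfl⟩, ⟨a.1, mem_convOrbit_self S a.1⟩⟩
  invFun p := ⟨p.2.1, by
    obtain ⟨⟨O, hO⟩, ⟨b, hb⟩⟩ := p
    obtain ⟨a, haT, rfl⟩ := hO
    obtain ⟨s, hs, rfl⟩ := hb
    exact hinv a haT s hs⟩
  left_inv a := rfl
  right_inv p := by
    obtain ⟨⟨O, hO⟩, ⟨b, hb⟩⟩ := p
    have h : convOrbit S b = O := by
      obtain ⟨a, haT, rfl⟩ := hO
      exact convOrbit_eq_of_mem hb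
    subst h
    rfl

lemma card_set_eq_sum_orbits [Finite G] (S : Subgroup G) (T : Set G)
    (hinv : ∀ a ∈ T, ∀ s ∈ S, s⁻¹ * a * s ∈ T)
    [Fintype {O : Set G // ∃ a ∈ T, O = convOrbit S a}] :
    Nat.card T = ∑ O : {O : Set G // ∃ a ∈ T, O = convOrbit S a}, Nat.card O.1 := by
  have h1 := Nat.card_congr (orbitsEquiv S T hinv)
  haveI : ∀ O : {O : Set G // ∃ a ∈ T, O = convOrbit S a}, Fintype O.1 :=
    fun O => Fintype.ofFinite _
  rw [h1, Nat.card_eq_fintype_card, Fintype.card_sigma]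
  simp [Nat.card_eq_fintype_card]

/-- Orbit-stabilizer: the orbit of a nontrivial kernel element under `N` has
cardinality `[N : K]`. -/
lemma card_convOrbit_eq_relIndex [Finite G] (K N : Subgroup G) [hKn : K.Normal]
    (hKN : K ≤ N)
    (hfrob : ∀ k ∈ K, k ≠ 1 → ∀ g : G, g * k = k * g → g ∈ K)
    (hab : ∀ a ∈ K, ∀ b ∈ K, a * b = b * a)
    (a : G) (ha : a ∈ K) (ha1 : a ≠ 1) :
    Nat.card (convOrbit N a) = K.relIndex N := by
  classical
  let f0 : ↥N → ↥(convOrbit N a) := fun n => ⟨(n : G)⁻¹ * a * n, n, n.2, rfl⟩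
  have key : ∀ n n' : ↥N, ((n : G)⁻¹ * a * n = (n' : G)⁻¹ * a * n') ↔
      ((n : G)⁻¹ * n' ∈ K) := by
    intro n n'
    set m : G := (n : G)⁻¹ * n' with hm
    have hb : (n : G)⁻¹ * a * n ∈ K := by
      simpa using hKn.conj_mem a ha (n : G)⁻¹
    constructor
    · intro h
      have h2 : (n' : G)⁻¹ * a * n' = m⁻¹ * ((n : G)⁻¹ * a * n) * m := by
        rw [hm]; group
      rw [h2] at h
      have hcomm : m * ((n : G)⁻¹ * a * n) = ((n : G)⁻¹ * a * n) * m := by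
        conv_lhs => rw [h]
        group
      by_cases hm1 : m = 1
      · rw [hm1]; exact K.one_mem
      · have hbne : (n : G)⁻¹ * a * n ≠ 1 := by
          intro hc
          apply ha1
          have := congrArg (fun z => (n : G) * z * (n : G)⁻¹) hc
          simpa [mul_assoc] using this
        exact hfrob _ hb hbne m hcomm
    · intro hmK
      have hcm : m * ((n : G)⁻¹ * a * n) = ((n : G)⁻¹ * a * n) * m :=
        hab m hmK _ hb
      have h3 : m⁻¹ * ((n : G)⁻¹ * a * n) * m = (n : G)⁻¹ * a * n := by
        rw [mul_assoc, ← hcm, ← mul_assoc, inv_mul_cancel, one_mul]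
      have h2 : (n' : G)⁻¹ * a * n' = m⁻¹ * ((n : G)⁻¹ * a * n) * m := by
        rw [hm]; group
      rw [h2, h3]
  have hwd : ∀ n n' : ↥N, (QuotientGroup.leftRel (K.subgroupOf N)).r n n' → f0 n = f0 n' := by
    intro n n' h
    rw [QuotientGroup.leftRel_apply, Subgroup.mem_subgroupOf] at h
    exact Subtype.ext ((key n n').2 h)
  let F : (↥N ⧸ K.subgroupOf N) → ↥(convOrbit N a) := Quotient.lift f0 hwd
  have hinj : Function.Injective F := by
    intro q q'
    induction q using Quotient.inductionOn with
    | h n =>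
      induction q' using Quotient.inductionOn with
      | h n' =>
        intro h
        have hval : (n : G)⁻¹ * a * n = (n' : G)⁻¹ * a * n' := congrArg Subtype.val h
        exact Quotient.sound (QuotientGroup.leftRel_apply.mpr
          (Subgroup.mem_subgroupOf.mpr ((key n n').1 hval)))
  have hsurj : Function.Surjective F := by
    rintro ⟨b, s, hs, rfl⟩
    exact ⟨Quotient.mk _ (⟨s, hs⟩ : ↥N), rfl⟩
  have hcard : Nat.card (↥N ⧸ K.subgroupOf N) = Nat.card (convOrbit N a) :=
    Nat.card_eq_of_bijective F ⟨hinj, hsurj⟩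
  rw [← hcard, Subgroup.relIndex, Subgroup.index_eq_card]

lemma convOrbit_of_mem_comm {S : Subgroup G} {a : G}
    (h : ∀ s ∈ S, s * a = a * s) : convOrbit S a = {a} := by
  ext b
  constructor
  · rintro ⟨s, hs, rfl⟩
    show s⁻¹ * a * s = a
    rw [mul_assoc, ← h s hs, ← mul_assoc, inv_mul_cancel, one_mul]
  · intro hb
    have hba := Set.eq_of_mem_singleton hb
    subst hba
    exact mem_convOrbit_self S _


/-- Counting the orbits of `N` on `K`: one trivial orbit and the rest of size `[N:K]`. -/
lemma card_kernel_eq {G : Type*} [Group G] [Finite G] (K N : Subgroup G) [hKn : K.Normal]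
    (hKN : K ≤ N)
    (hfrob : ∀ k ∈ K, k ≠ 1 → ∀ g : G, g * k = k * g → g ∈ K)
    (hab : ∀ a ∈ K, ∀ b ∈ K, a * b = b * a) :
    Nat.card K = 1 +
      (Nat.card {O : Set G // ∃ a ∈ (K : Set G), O = convOrbit N a} - 1) * K.relIndex N := by
  classical
  haveI : Fintype {O : Set G // ∃ a ∈ (K : Set G), O = convOrbit N a} := Fintype.ofFinite _
  have hinv : ∀ a ∈ (K : Set G), ∀ s ∈ N, s⁻¹ * a * s ∈ (K : Set G) := by
    intro a ha s _
    simpa using hKn.conj_mem a ha s⁻¹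
  have hsum := card_set_eq_sum_orbits N (K : Set G) hinv
  have hone : ({1} : Set G) = convOrbit N 1 := (convOrbit_one N).symm
  let O₀ : {O : Set G // ∃ a ∈ (K : Set G), O = convOrbit N a} := ⟨{1}, 1, K.one_mem, hone⟩
  rw [← Finset.add_sum_erase Finset.univ _ (Finset.mem_univ O₀)] at hsum
  have hterm : ∀ O ∈ Finset.univ.erase O₀, Nat.card O.1 = K.relIndex N := by
    intro O hO
    obtain ⟨a, haK, hOa⟩ := O.2
    have ha1 : a ≠ 1 := by
      rintro rfl
      exact (Finset.mem_erase.mp hO).1 (Subtype.ext (by rw [hOa, convOrbit_one]))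
    rw [hOa]
    exact card_convOrbit_eq_relIndex K N hKN hfrob hab a haK ha1
  rw [Finset.sum_congr rfl hterm, Finset.sum_const, smul_eq_mul,
    Finset.card_erase_of_mem (Finset.mem_univ O₀), Finset.card_univ] at hsum
  have h1 : Nat.card (O₀.1 : Set G) = 1 := Nat.card_unique
  rw [h1] at hsum
  have hKcard : Nat.card K = Nat.card (K : Set G) := rfl
  rw [hKcard, hsum, Nat.card_eq_fintype_card]

/-- Counting the orbits of `K` on all of `G`. -/
lemma card_orbits_univ {G : Type*} [Group G] [Finite G] (K : Subgroup G) [hKn : K.Normal]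
    (hfrob : ∀ k ∈ K, k ≠ 1 → ∀ g : G, g * k = k * g → g ∈ K)
    (hab : ∀ a ∈ K, ∀ b ∈ K, a * b = b * a) :
    ∃ t : ℕ,
      Nat.card {O : Set G // ∃ a ∈ (Set.univ : Set G), O = convOrbit K a} = Nat.card K + t
        ∧ Nat.card G = Nat.card K * (1 + t) := by
  classical
  haveI : Fintype {O : Set G // ∃ a ∈ (Set.univ : Set G), O = convOrbit K a} :=
    Fintype.ofFinite _
  have hsum := card_set_eq_sum_orbits K Set.univ (by intros; trivial)
  have horb : ∀ k ∈ K, convOrbit K k = {k} := fun k hk =>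
    convOrbit_of_mem_comm (fun s hs => hab s hs k hk)
  let p : {O : Set G // ∃ a ∈ (Set.univ : Set G), O = convOrbit K a} → Prop :=
    fun O => ∃ k ∈ K, O.1 = {k}
  have hKfilter : (Finset.univ.filter p).card = Nat.card K := by
    rw [← Fintype.card_subtype, ← Nat.card_eq_fintype_card]
    refine (Nat.card_congr (Equiv.ofBijective
      (fun k : ↥K => (⟨⟨{(k : G)}, (k : G), trivial, (horb k k.2).symm⟩,
        ⟨(k : G), k.2, rfl⟩⟩ : {O // p O})) ⟨?_, ?_⟩)).symm
    · intro k k' h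
      have := congrArg (fun z : {O // p O} => z.1.1) h
      exact Subtype.ext (Set.singleton_eq_singleton_iff.mp this)
    · rintro ⟨⟨O, hO⟩, hpO⟩
      obtain ⟨k, hk, hOk⟩ := hpO
      exact ⟨⟨k, hk⟩, Subtype.ext (Subtype.ext hOk.symm)⟩
  refine ⟨(Finset.univ.filter fun O => ¬ p O).card, ?_, ?_⟩
  · rw [Nat.card_eq_fintype_card, ← Finset.card_univ,
      ← Finset.card_filter_add_card_filter_not (p := p), hKfilter]
  · have hone : ∀ O ∈ Finset.univ.filter p, Nat.card O.1 = 1 := by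
      intro O hO
      obtain ⟨k, hk, hOk⟩ := (Finset.mem_filter.mp hO).2
      rw [hOk]
      exact Nat.card_unique
    have hbig : ∀ O ∈ Finset.univ.filter (fun O => ¬ p O), Nat.card O.1 = Nat.card K := by
      intro O hO
      have hnp := (Finset.mem_filter.mp hO).2
      obtain ⟨a, -, hOa⟩ := O.2
      have haK : a ∉ K := by
        intro haK
        exact hnp ⟨a, haK, by rw [hOa, horb a haK]⟩
      rw [hOa]
      refine (Nat.card_eq_of_bijective
        (fun k : ↥K => (⟨(k : G)⁻¹ * a * k, (k : G), k.2, rfl⟩ : convOrbit K a))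
        ⟨?_, ?_⟩).symm
      · intro k k' h
        have hval : (k : G)⁻¹ * a * k = (k' : G)⁻¹ * a * k' := congrArg Subtype.val h
        by_contra hne
        have hm1 : (k : G)⁻¹ * k' ≠ 1 := by
          intro hc
          apply hne
          apply Subtype.ext
          have := congrArg (fun z => (k : G) * z) hc
          simpa [mul_assoc] using this.symm
        have hmK : (k : G)⁻¹ * (k' : G) ∈ K := K.mul_mem (K.inv_mem k.2) k'.2
        have h2 : (k' : G)⁻¹ * a * k' =
            ((k : G)⁻¹ * k')⁻¹ * ((k : G)⁻¹ * a * k) * ((k : G)⁻¹ * k') := by group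
        rw [h2] at hval
        have hbm : ((k : G)⁻¹ * k') * ((k : G)⁻¹ * a * k) =
            ((k : G)⁻¹ * a * k) * ((k : G)⁻¹ * k') := by
          conv_lhs => rw [hval]
          group
        have hbK : (k : G)⁻¹ * a * k ∈ K := hfrob _ hmK hm1 _ hbm.symm
        apply haK
        have ha : a = (k : G) * ((k : G)⁻¹ * a * k) * (k : G)⁻¹ := by group
        rw [ha]
        exact K.mul_mem (K.mul_mem k.2 hbK) (K.inv_mem k.2)
      · rintro ⟨b, s, hs, rfl⟩
        exact ⟨⟨s, hs⟩, rfl⟩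
    rw [← Finset.sum_filter_add_sum_filter_not Finset.univ p,
      Finset.sum_congr rfl hone, Finset.sum_congr rfl hbig,
      Finset.sum_const, Finset.sum_const, smul_eq_mul, smul_eq_mul, hKfilter] at hsum
    have huniv : Nat.card (Set.univ : Set G) = Nat.card G :=
      Nat.card_congr (Equiv.Set.univ G)
    rw [huniv] at hsum
    rw [hsum]
    ring

end Aux

theorem stmt19 {G : Type*} [Group G] [Finite G] (K H : Subgroup G) [K.Normal]
    (hcompl : K.IsComplement' H)
    (hKbot : K ≠ ⊥) (hKtop : K ≠ ⊤)
    -- Frobenius condition: centralizers of nontrivial kernel elements lie in the kernel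
    (hfrob : ∀ k ∈ K, k ≠ 1 → ∀ g : G, g * k = k * g → g ∈ K)
    -- the kernel is abelian
    (hab : ∀ a ∈ K, ∀ b ∈ K, a * b = b * a)
    (x : G) (hx : x ∈ K) (hx1 : x ≠ 1)
    (ℓ : ℕ)
    -- `ℓ + 1` is the number of orbits of the conjugation action of `N_G(⟨x⟩)` on `K`
    -- (equivalently, of `N_G(⟨x⟩)/C_G(x)` on `K`)
    (hℓ : numConjOrbits (Subgroup.normalizer (Subgroup.zpowers x : Set G)) (K : Set G) = ℓ + 1) :
    numConjOrbits (Subgroup.centralizer {x}) (solubilizer G x) =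
      Nat.card H + ℓ * K.relIndex (Subgroup.normalizer (Subgroup.zpowers x : Set G)) := by
  classical
  set N := Subgroup.normalizer (Subgroup.zpowers x : Set G) with hNdef
  have hcent : Subgroup.centralizer {x} = K := by
    ext g
    rw [Subgroup.mem_centralizer_iff]
    constructor
    · intro h
      exact hfrob x hx hx1 g (h x rfl).symm
    · intro hg s hs
      have hsx : s = x := hs
      subst hsx
      exact hab s hx g hg
  have hKN : K ≤ N := by
    intro k hk
    have hc : Commute k x := hab k hk x hx
    have hfix : ∀ h ∈ Subgroup.zpowers x, k * h * k⁻¹ = h := by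
      intro h hh
      obtain ⟨m, rfl⟩ := Subgroup.mem_zpowers_iff.mp hh
      rw [(hc.zpow_right m).eq, mul_inv_cancel_right]
    have hfix' : ∀ h ∈ Subgroup.zpowers x, k⁻¹ * h * k = h := by
      intro h hh
      obtain ⟨m, rfl⟩ := Subgroup.mem_zpowers_iff.mp hh
      rw [((hc.zpow_right m).inv_left).eq, inv_mul_cancel_right]
    rw [hNdef, Subgroup.mem_normalizer_iff]
    intro h
    constructor
    · intro hh
      rw [hfix h hh]; exact hh
    · intro hh
      have h3 := hfix' _ hh
      have h2 : k⁻¹ * (k * h * k⁻¹) * k = h := by group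
      have he : h = k * h * k⁻¹ := h2.symm.trans h3
      rw [he]
      exact hh
  have hSolv : solubilizer G x = Set.univ := by
    apply Set.eq_univ_of_forall
    intro y
    show IsSolvable ↥(Subgroup.closure {x, y})
    have hmem : ∀ p : ↥(Subgroup.closure {x, y}),
        (QuotientGroup.mk' K) (p : G) ∈ Subgroup.zpowers ((QuotientGroup.mk' K) y) := by
      intro p
      have hle : Subgroup.closure {x, y} ≤
          Subgroup.comap (QuotientGroup.mk' K)
            (Subgroup.zpowers ((QuotientGroup.mk' K) y)) := by
        rw [Subgroup.closure_le]
        rintro z (rfl | rfl)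
        · rw [SetLike.mem_coe, Subgroup.mem_comap]
          have h1 : (QuotientGroup.mk' K) z = 1 := (QuotientGroup.eq_one_iff z).mpr hx
          rw [h1]
          exact Subgroup.one_mem _
        · rw [SetLike.mem_coe, Subgroup.mem_comap]
          exact Subgroup.mem_zpowers _
      exact hle p.2
    let g : ↥(Subgroup.closure {x, y}) →* ↥(Subgroup.zpowers ((QuotientGroup.mk' K) y)) :=
      MonoidHom.codRestrict
        ((QuotientGroup.mk' K).comp (Subgroup.closure {x, y}).subtype) _ hmem
    haveI hs1 : IsSolvable ↥(K.subgroupOf (Subgroup.closure {x, y})) := by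
      apply isSolvable_of_comm
      intro a b
      apply Subtype.ext
      apply Subtype.ext
      exact hab _ (Subgroup.mem_subgroupOf.mp a.2) _ (Subgroup.mem_subgroupOf.mp b.2)
    haveI hs2 : IsSolvable ↥(Subgroup.zpowers ((QuotientGroup.mk' K) y)) := by
      apply isSolvable_of_comm
      intro a b
      obtain ⟨m, hm⟩ := Subgroup.mem_zpowers_iff.mp a.2
      obtain ⟨n, hn⟩ := Subgroup.mem_zpowers_iff.mp b.2
      have hcomm : (a : G ⧸ K) * b = (b : G ⧸ K) * a := by
        rw [← hm, ← hn]
        exact ((Commute.refl _).zpow_zpow m n).eq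
      exact Subtype.ext (by push_cast; exact hcomm)
    refine solvable_of_ker_le_range ((K.subgroupOf (Subgroup.closure {x, y})).subtype) g ?_ (hG' := hs1) (hG'' := hs2)
    intro p hp
    replace hp : (QuotientGroup.mk' K) (p : G) = 1 := congrArg Subtype.val (MonoidHom.mem_ker.mp hp)
    have hpK : (p : G) ∈ K := (QuotientGroup.eq_one_iff _).mp hp
    exact MonoidHom.mem_range.mpr ⟨⟨p, Subgroup.mem_subgroupOf.mpr hpK⟩, rfl⟩
  obtain ⟨t, hA1, hA2⟩ := card_orbits_univ K hfrob hab
  have hB := card_kernel_eq K N hKN hfrob hab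
  rw [← numConjOrbits_def, hℓ, Nat.add_sub_cancel] at hB
  have hKH : Nat.card K * Nat.card H = Nat.card G := hcompl.card_mul
  have hK0 : 0 < Nat.card K := Nat.card_pos
  have hH : Nat.card H = 1 + t := Nat.eq_of_mul_eq_mul_left hK0 (by rw [hKH, hA2])
  rw [hcent, hSolv, numConjOrbits_def, hA1, hB, hH]
  ring
end
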